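/- Let c be a Coxeter element in the Weyl group of an affine root system. The fixed space of the action of c on the dual space V* is the line spanned by φ_c, where φ_c ∈ V* is defined by ⟨φ_c, v⟩ = K(γ_c, v) for all v ∈ V. -/

import Mathlib

open scoped BigOperators

noncomputable section

/-- A symmetrizable generalized Cartan matrix of affine type, together with the
coefficient vector `dz` of the primitive positive imaginary root `δ` spanning the
(one dimensional) kernel of the associated symmetric bilinear form. -/
structure AffineGCM (n : ℕ) where
  /-- the generalized Cartan matrix -/
  a : Matrix (Fin n) (Fin n) ℤ
  /-- symmetrizing factors -/
  d : Fin n → ℝ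
  diag : ∀ i, a i i = 2
  offdiag : ∀ i j, i ≠ j → a i j ≤ 0
  d_pos : ∀ i, 0 < d i
  symmetrizable : ∀ i j, d i * (a i j : ℝ) = d j * (a j i : ℝ)
  /-- `K` is positive semidefinite (on the real span of the simple roots) -/
  posSemidef : ∀ g : Fin n → ℝ, 0 ≤ ∑ i, ∑ j, g i * g j * (d i * (a i j : ℝ))
  /-- `K` is not positive definite -/
  not_posDef : ∃ g : Fin n → ℝ, g ≠ 0 ∧ ∑ i, ∑ j, g i * g j * (d i * (a i j : ℝ)) = 0
  /-- the restriction of `K` to the span of every proper subset of the simple roots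
  is positive definite -/
  proper_posDef : ∀ J : Finset (Fin n), J ≠ Finset.univ →
    ∀ g : Fin n → ℝ, (∀ i, i ∉ J → g i = 0) → g ≠ 0 →
      0 < ∑ i, ∑ j, g i * g j * (d i * (a i j : ℝ))
  /-- coordinates of the positive imaginary root `δ` in the basis of simple roots -/
  dz : Fin n → ℤ
  dz_pos : ∀ i, 0 < dz i
  /-- `δ` is the imaginary root closest to the origin: its coordinates are coprime -/
  dz_prim : Finset.univ.gcd dz = 1
  /-- `δ` spans the kernel of `K` -/
  dz_ker : ∀ j, ∑ i, (dz i : ℝ) * (d i * (a i j : ℝ)) = 0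

namespace AffineGCM

variable {n : ℕ}

/-- The ambient vector space `V`, with the simple roots as standard basis. -/
abbrev V (n : ℕ) := Fin n → ℂ

/-- the simple root `α i` (the `i`-th standard basis vector) -/
def α (i : Fin n) : V n := Pi.single i 1

/-- a vector is *positive* if it lies in the nonnegative real span of the simple roots -/
def IsPosRoot (v : V n) : Prop := ∀ i, 0 ≤ (v i).re ∧ (v i).im = 0

/-- a vector is *negative* if it lies in the nonpositive real span of the simple roots -/
def IsNegRoot (v : V n) : Prop := ∀ i, (v i).re ≤ 0 ∧ (v i).im = 0

/-- the `g`-orbit of `x`: all `g ^ k • x` for integers `k` -/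
def orbit (g : V n ≃ₗ[ℂ] V n) (x : V n) : Set (V n) := Set.range fun k : ℤ => (g ^ k) x

/-- `U g`: the span of all eigenvectors of `g`, i.e. the direct sum of its eigenspaces -/
def eigSpan (g : V n ≃ₗ[ℂ] V n) : Submodule ℂ (V n) :=
  ⨆ μ : ℂ, Module.End.eigenspace (g : Module.End ℂ (V n)) μ

/-- the span `V_fin` of the simple roots other than `α aff` -/
def Vfin (aff : Fin n) : Submodule ℂ (V n) :=
  Submodule.span ℂ (α '' {i : Fin n | i ≠ aff})

variable (C : AffineGCM n)

/-- the simple coroot `α i ^ ∨ = (d i)⁻¹ • α i` -/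
def coroot (i : Fin n) : V n := ((C.d i : ℂ))⁻¹ • α i

/-- The symmetric bilinear form `K`, determined by `K (coroot i) (α j) = a i j`,
that is, `K (α i) (α j) = d i * a i j`. -/
def K : V n →ₗ[ℂ] V n →ₗ[ℂ] ℂ :=
  LinearMap.mk₂ ℂ
    (fun x y => ∑ i, ∑ j, x i * y j * ((C.d i : ℂ) * (C.a i j : ℂ)))
    (fun x x' y => by
      simp only [Pi.add_apply, add_mul, Finset.sum_add_distrib])
    (fun r x y => by
      simp only [Pi.smul_apply, smul_eq_mul, Finset.mul_sum]
      exact Finset.sum_congr rfl fun i _ => Finset.sum_congr rfl fun j _ => by ring)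
    (fun x y y' => by
      simp only [Pi.add_apply, mul_add, add_mul, Finset.sum_add_distrib])
    (fun r x y => by
      simp only [Pi.smul_apply, smul_eq_mul, Finset.mul_sum]
      exact Finset.sum_congr rfl fun i _ => Finset.sum_congr rfl fun j _ => by ring)

/-- the linear map `v ↦ v - K x v • y`; reflections are special cases -/
def reflMap (x y : V n) : V n →ₗ[ℂ] V n where
  toFun v := v - C.K x v • y
  map_add' u v := by simp only [map_add, add_smul]; abel
  map_smul' r u := by simp only [map_smul, smul_eq_mul, RingHom.id_apply, smul_sub, smul_smul]

lemma reflMap_apply (x y v : V n) : C.reflMap x y v = v - C.K x v • y := rfl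

/-- the simple reflection `s i` as a linear endomorphism -/
def sLin (i : Fin n) : V n →ₗ[ℂ] V n := C.reflMap (C.coroot i) (α i)

lemma K_α_α (i j : Fin n) : C.K (α i) (α j) = (C.d i : ℂ) * (C.a i j : ℂ) := by
  simp [K, α, LinearMap.mk₂_apply, Pi.single_apply, ite_mul, zero_mul,
    Finset.sum_ite_eq', Finset.mem_univ]

lemma K_coroot_α (i j : Fin n) : C.K (C.coroot i) (α j) = (C.a i j : ℂ) := by
  have hd : (C.d i : ℂ) ≠ 0 := by exact_mod_cast ne_of_gt (C.d_pos i)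
  simp only [coroot, map_smul, LinearMap.smul_apply, smul_eq_mul, K_α_α]
  field_simp

lemma sLin_invol (i : Fin n) (v : V n) : C.sLin i (C.sLin i v) = v := by
  have h2 : C.K (C.coroot i) (α i) = 2 := by
    rw [K_coroot_α, C.diag]; norm_num
  simp only [sLin, reflMap_apply, map_sub, map_smul, h2, smul_eq_mul]
  module

/-- the simple reflection `s i` -/
def s (i : Fin n) : V n ≃ₗ[ℂ] V n :=
  LinearEquiv.ofLinear (C.sLin i) (C.sLin i)
    (LinearMap.ext fun v => C.sLin_invol i v) (LinearMap.ext fun v => C.sLin_invol i v)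

/-- the Weyl group `W`, as a subgroup of the group of linear automorphisms of `V` -/
def Wgroup : Subgroup (V n ≃ₗ[ℂ] V n) := Subgroup.closure (Set.range C.s)

/-- the Coxeter element `c = s 1 * s 2 * ⋯ * s n` -/
def cox : V n ≃ₗ[ℂ] V n := (List.ofFn C.s).prod

/-- the positive imaginary root `δ` -/
def δv : V n := fun i => ((C.dz i : ℤ) : ℂ)

/-- the set of real roots: `W`-images of the simple roots -/
def realRoots : Set (V n) := {v | ∃ w ∈ C.Wgroup, ∃ i, w (α i) = v}

/-- the root system `Φ`: real roots together with the imaginary roots `k • δ`, `k ≠ 0` -/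
def Φ : Set (V n) := C.realRoots ∪ {v | ∃ k : ℤ, k ≠ 0 ∧ v = (k : ℂ) • C.δv}

/-- `T→ = {α 1, s 1 α 2, …, s 1 ⋯ s (n-1) α n}` -/
def Tproj : Set (V n) :=
  Set.range fun k : Fin n => ((List.ofFn C.s).take k.val).prod (α k)

/-- `T← = {α n, s n α (n-1), …, s n ⋯ s 2 α 1}` -/
def Tinj : Set (V n) :=
  Set.range fun k : Fin n => ((List.ofFn C.s).reverse.take (n - 1 - k.val)).prod (α k)

/-- `Φ_fin`, the finite root system `Φ ∩ V_fin` -/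
def Φfin (aff : Fin n) : Set (V n) := C.Φ ∩ (Vfin aff : Set (V n))

/-- the root `θ = δ - [δ : α aff] • α aff` of `Φ_fin` -/
def θv (aff : Fin n) : V n := C.δv - ((C.dz aff : ℤ) : ℂ) • α aff

/-- the reflection `t β : v ↦ v - K (β^∨) v • β` in a (real) root `β`,
where `β^∨ = (2 / K β β) • β` -/
def tRefl (β : V n) : V n →ₗ[ℂ] V n := C.reflMap ((2 / C.K β β) • β) β

/-- `c_◁ = s 1 * ⋯ * s (aff - 1)` -/
def cleft (aff : Fin n) : V n →ₗ[ℂ] V n := ((List.ofFn C.sLin).take aff.val).prod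

/-- `c_▷ = s (aff + 1) * ⋯ * s n` -/
def cright (aff : Fin n) : V n →ₗ[ℂ] V n := ((List.ofFn C.sLin).drop (aff.val + 1)).prod

/-- `Υ^fin = Φ_fin ∩ U c` -/
def Υfin (aff : Fin n) : Set (V n) := C.Φfin aff ∩ (eigSpan C.cox : Set (V n))

/-- `B` is a simple system for a set `Θ` of roots: a linearly independent subset of `Θ`
such that every element of `Θ` is a nonnegative or a nonpositive combination of `B`. -/
def IsSimpleSystem (Θ : Set (V n)) (B : Finset (V n)) : Prop :=
  ↑B ⊆ Θ ∧ LinearIndependent ℂ (fun b : B => (b : V n)) ∧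
    ∀ v ∈ Θ, ∃ g : V n → ℝ, ((∀ b ∈ B, 0 ≤ g b) ∨ (∀ b ∈ B, g b ≤ 0)) ∧
      v = ∑ b ∈ B, (g b : ℂ) • b

/-- two roots of `Θ` are connected if they are joined by a chain of roots of `Θ`
that are pairwise non-orthogonal (with respect to `K`) -/
def Connected (Θ : Set (V n)) (x y : V n) : Prop :=
  Relation.ReflTransGen (fun u v => u ∈ Θ ∧ v ∈ Θ ∧ C.K u v ≠ 0) x y

/-- the irreducible component of `x` in `Θ` -/
def component (Θ : Set (V n)) (x : V n) : Set (V n) := {y | y ∈ Θ ∧ C.Connected Θ x y}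

/-- a set of roots is of finite type `A` if it consists exactly of the vectors
`±(β i + β (i+1) + ⋯ + β j)` for a linearly independent family `β 1, …, β k` -/
def IsTypeA (Θ : Set (V n)) : Prop :=
  ∃ (k : ℕ) (β : Fin k → V n), LinearIndependent ℂ β ∧ (∀ i, β i ∈ Θ) ∧
    Θ = {v | ∃ i j : Fin k, i ≤ j ∧
      (v = ∑ l ∈ Finset.Icc i j, β l ∨ v = -∑ l ∈ Finset.Icc i j, β l)}

/-- `Ω = {β 1, t (β 1) (β 2), …, t (β 1) ⋯ t (β (m-1)) (β m)}` for an ordered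
tuple `β` of roots -/
def Ωset {m : ℕ} (β : Fin m → V n) : Set (V n) :=
  Set.range fun j : Fin m => (((List.ofFn fun i => C.tRefl (β i)).take j.val).prod) (β j)

/-- `s i` is initial in a Coxeter element `c` if `c` is the product of a permutation
of all the simple reflections starting with `s i` -/
def IsInitial (i : Fin n) (c : V n ≃ₗ[ℂ] V n) : Prop :=
  ∃ l : List (Fin n), (i :: l).Perm (List.finRange n) ∧ ((i :: l).map C.s).prod = c

/-- `s i` is final in a Coxeter element `c` if `c` is the product of a permutation
of all the simple reflections ending with `s i` -/
def IsFinal (i : Fin n) (c : V n ≃ₗ[ℂ] V n) : Prop :=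
  ∃ l : List (Fin n), (l ++ [i]).Perm (List.finRange n) ∧ ((l ++ [i]).map C.s).prod = c

/-- the skew-symmetric bilinear form `ω_c`, determined by
`ω_c (coroot i) (α j) = a i j` if `i > j`, `= 0` if `i = j`, `= -a i j` if `i < j` -/
def ω : V n →ₗ[ℂ] V n →ₗ[ℂ] ℂ :=
  LinearMap.mk₂ ℂ
    (fun x y => ∑ i, ∑ j, x i * y j *
      ((if j < i then 1 else if i = j then 0 else -1) * ((C.d i : ℂ) * (C.a i j : ℂ))))
    (fun x x' y => by
      simp only [Pi.add_apply, add_mul, Finset.sum_add_distrib])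
    (fun r x y => by
      simp only [Pi.smul_apply, smul_eq_mul, Finset.mul_sum]
      exact Finset.sum_congr rfl fun i _ => Finset.sum_congr rfl fun j _ => by ring)
    (fun x y y' => by
      simp only [Pi.add_apply, mul_add, add_mul, Finset.sum_add_distrib])
    (fun r x y => by
      simp only [Pi.smul_apply, smul_eq_mul, Finset.mul_sum]
      exact Finset.sum_congr rfl fun i _ => Finset.sum_congr rfl fun j _ => by ring)

section Aux

variable {n : ℕ} (C : AffineGCM n)

lemma K_apply (x y : V n) :
    C.K x y = ∑ i, ∑ j, x i * y j * ((C.d i : ℂ) * (C.a i j : ℂ)) := rfl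

lemma Mc_symm (i j : Fin n) :
    (C.d i : ℂ) * (C.a i j : ℂ) = (C.d j : ℂ) * (C.a j i : ℂ) := by
  have h : ((C.d i * (C.a i j : ℝ) : ℝ) : ℂ) = ((C.d j * (C.a j i : ℝ) : ℝ) : ℂ) := by
    rw [C.symmetrizable i j]
  push_cast at h
  exact h

lemma K_symm (x y : V n) : C.K x y = C.K y x := by
  rw [K_apply, K_apply, Finset.sum_comm]
  refine Finset.sum_congr rfl fun j _ => Finset.sum_congr rfl fun i _ => ?_
  rw [C.Mc_symm i j]; ring

lemma K_coroot_apply (i : Fin n) (y : V n) :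
    C.K (C.coroot i) y = ∑ j, y j * (C.a i j : ℂ) := by
  have hd : (C.d i : ℂ) ≠ 0 := by exact_mod_cast ne_of_gt (C.d_pos i)
  have h1 : C.K (C.coroot i) y
      = ((C.d i : ℂ))⁻¹ * ∑ p, ∑ j, (α i : V n) p * y j * ((C.d p : ℂ) * (C.a p j : ℂ)) := by
    rw [show C.coroot i = ((C.d i : ℂ))⁻¹ • α i from rfl, map_smul, LinearMap.smul_apply,
      smul_eq_mul, K_apply]
  rw [h1]
  rw [Finset.sum_eq_single i]
  · rw [Finset.mul_sum]
    refine Finset.sum_congr rfl fun j _ => ?_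
    simp only [α, Pi.single_apply, if_pos rfl, ite_true]
    field_simp
  · intro p _ hp
    refine Finset.sum_eq_zero fun j _ => ?_
    simp [α, Pi.single_apply, hp]
  · intro h; exact absurd (Finset.mem_univ i) h

lemma s_apply (i : Fin n) (v : V n) : C.s i v = v - C.K (C.coroot i) v • α i := rfl

lemma s_apply_coord {i j : Fin n} (h : j ≠ i) (v : V n) : (C.s i v) j = v j := by
  show (v - C.K (C.coroot i) v • α i) j = v j
  simp [α, Pi.single_apply, h]

lemma mul_apply (e f : V n ≃ₗ[ℂ] V n) (v : V n) : (e * f) v = e (f v) := rfl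

lemma listProd_coord (l : List (Fin n)) (v : V n) (j : Fin n) (hj : j ∉ l) :
    ((l.map C.s).prod) v j = v j := by
  induction l generalizing v with
  | nil => simp
  | cons i l ih =>
    have hji : j ≠ i := fun h => hj (by simp [h])
    have hjl : j ∉ l := fun h => hj (List.mem_cons_of_mem _ h)
    rw [List.map_cons, List.prod_cons, mul_apply, C.s_apply_coord hji, ih _ hjl]

lemma fixed_coroot : ∀ l : List (Fin n), l.Nodup → ∀ v : V n,
    ((l.map C.s).prod) v = v → ∀ i ∈ l, C.K (C.coroot i) v = 0 := by
  intro l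
  induction l with
  | nil => intro _ v _ i hi; exact absurd hi List.not_mem_nil
  | cons i l ih =>
    intro hl v h
    obtain ⟨hil, hl'⟩ := List.nodup_cons.mp hl
    set w := ((l.map C.s).prod) v with hw
    have hv : C.s i w = v := by
      rw [List.map_cons, List.prod_cons, mul_apply] at h
      exact h
    have hwi : w i = v i := C.listProd_coord l v i hil
    have h2 : w i - C.K (C.coroot i) w = v i := by
      have h3 := congrFun hv i
      rw [s_apply] at h3
      simpa [α, Pi.single_apply] using h3
    have hk : C.K (C.coroot i) w = 0 := by linear_combination hwi - h2
    have hwv : w = v := by rw [← hv, s_apply, hk, zero_smul, sub_zero]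
    have hfix : ((l.map C.s).prod) v = v := by rw [← hw, hwv]
    intro p hp
    rcases List.mem_cons.mp hp with h' | h'
    · rw [h', ← hwv]; exact hk
    · exact ih hl' v hfix p h'

lemma K_δ_left (y : V n) : C.K C.δv y = 0 := by
  rw [K_apply, Finset.sum_comm]
  refine Finset.sum_eq_zero fun j _ => ?_
  have hc : ∑ i, ((C.dz i : ℤ) : ℂ) * ((C.d i : ℂ) * (C.a i j : ℂ)) = 0 := by
    exact_mod_cast congrArg (fun r : ℝ => (r : ℂ)) (C.dz_ker j)
  have h2 : ∑ i, C.δv i * y j * ((C.d i : ℂ) * (C.a i j : ℂ))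
      = y j * ∑ i, ((C.dz i : ℤ) : ℂ) * ((C.d i : ℂ) * (C.a i j : ℂ)) := by
    rw [Finset.mul_sum]
    refine Finset.sum_congr rfl fun i _ => ?_
    show ((C.dz i : ℤ) : ℂ) * y j * _ = _
    ring
  rw [h2, hc, mul_zero]

lemma K_δ_right (y : V n) : C.K y C.δv = 0 := by rw [K_symm]; exact C.K_δ_left y

lemma s_δ (i : Fin n) : C.s i C.δv = C.δv := by
  rw [s_apply, K_symm, K_δ_left, zero_smul, sub_zero]

lemma listProd_δ (l : List (Fin n)) : ((l.map C.s).prod) C.δv = C.δv := by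
  induction l with
  | nil => simp
  | cons i l ih => rw [List.map_cons, List.prod_cons, mul_apply, ih, s_δ]

lemma cox_eq : C.cox = ((List.finRange n).map C.s).prod := by
  simp only [cox, List.ofFn_eq_map]

lemma cox_δ : C.cox C.δv = C.δv := by rw [cox_eq]; exact C.listProd_δ _

lemma K_s_s (i : Fin n) (x y : V n) : C.K (C.s i x) (C.s i y) = C.K x y := by
  have hd : (C.d i : ℂ) ≠ 0 := by exact_mod_cast ne_of_gt (C.d_pos i)
  have hα : α i = (C.d i : ℂ) • C.coroot i := by
    rw [coroot, smul_smul, mul_inv_cancel₀ hd, one_smul]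
  have h1 : C.K x (α i) = (C.d i : ℂ) * C.K (C.coroot i) x := by
    rw [K_symm, hα, map_smul, LinearMap.smul_apply, smul_eq_mul]
  have h2 : C.K (α i) y = (C.d i : ℂ) * C.K (C.coroot i) y := by
    rw [hα, map_smul, LinearMap.smul_apply, smul_eq_mul]
  have h3 : C.K (α i) (α i) = 2 * (C.d i : ℂ) := by
    rw [K_α_α, C.diag i]; push_cast; ring
  simp only [s_apply, map_sub, map_smul, LinearMap.sub_apply, LinearMap.smul_apply, smul_eq_mul]
  rw [h1, h2, h3]
  ring

lemma K_listProd (l : List (Fin n)) (x y : V n) :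
    C.K (((l.map C.s).prod) x) (((l.map C.s).prod) y) = C.K x y := by
  induction l generalizing x y with
  | nil => simp
  | cons i l ih =>
    rw [List.map_cons, List.prod_cons, mul_apply, mul_apply, K_s_s, ih]

lemma K_cox (x y : V n) : C.K (C.cox x) (C.cox y) = C.K x y := by
  rw [cox_eq]; exact C.K_listProd _ x y

end Aux

section Aux2

variable {n : ℕ} (C : AffineGCM n)

/-- coordinatewise complex conjugation -/
def conjv (v : V n) : V n := fun j => (starRingEnd ℂ) (v j)

lemma s_conj (i : Fin n) (v : V n) : C.s i (conjv v) = conjv (C.s i v) := by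
  have hK : C.K (C.coroot i) (conjv v) = (starRingEnd ℂ) (C.K (C.coroot i) v) := by
    rw [K_coroot_apply, K_coroot_apply, map_sum]
    refine Finset.sum_congr rfl fun j _ => ?_
    simp [conjv, map_mul]
  have hα : ∀ j, (starRingEnd ℂ) ((α i : V n) j) = (α i : V n) j := by
    intro j
    simp only [α, Pi.single_apply]
    split <;> simp
  funext j
  show (conjv v - C.K (C.coroot i) (conjv v) • α i) j = conjv (v - C.K (C.coroot i) v • α i) j
  simp only [Pi.sub_apply, Pi.smul_apply, smul_eq_mul, conjv, hK, map_sub, map_mul, hα]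

lemma listProd_conj (l : List (Fin n)) (v : V n) :
    ((l.map C.s).prod) (conjv v) = conjv (((l.map C.s).prod) v) := by
  induction l generalizing v with
  | nil => simp
  | cons i l ih =>
    rw [List.map_cons, List.prod_cons, mul_apply, mul_apply, ih, s_conj]

lemma cox_conj (v : V n) : C.cox (conjv v) = conjv (C.cox v) := by
  rw [cox_eq]; exact C.listProd_conj _ v

lemma Vfin_coord_aff {aff : Fin n} {v : V n} (hv : v ∈ Vfin aff) : v aff = 0 := by
  have hle : Vfin aff ≤ LinearMap.ker (LinearMap.proj aff : (Fin n → ℂ) →ₗ[ℂ] ℂ) := by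
    rw [Vfin, Submodule.span_le]
    rintro _ ⟨i, hi, rfl⟩
    have hi' : i ≠ aff := hi
    simp [LinearMap.mem_ker, α, Pi.single_apply, Ne.symm hi']
  simpa using hle hv

lemma mem_Vfin_of_coord {aff : Fin n} {v : V n} (hv : v aff = 0) : v ∈ Vfin aff := by
  have hrepr : v = ∑ i ∈ Finset.univ.erase aff, v i • α i := by
    funext j
    rw [Finset.sum_apply]
    by_cases hj : j = aff
    · have h0 : v j = 0 := by rw [hj]; exact hv
      rw [h0]
      symm
      refine Finset.sum_eq_zero fun i hi => ?_
      have hne : i ≠ aff := (Finset.mem_erase.mp hi).1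
      have hji : j ≠ i := by rw [hj]; exact Ne.symm hne
      simp [α, Pi.single_apply, hji]
    · rw [Finset.sum_eq_single j]
      · simp [α]
      · intro i _ hij
        simp [α, Pi.single_apply, Ne.symm hij]
      · intro h
        exact absurd (Finset.mem_erase.mpr ⟨hj, Finset.mem_univ j⟩) h
  rw [hrepr]
  refine Submodule.sum_mem _ fun i hi => Submodule.smul_mem _ _ ?_
  exact Submodule.subset_span ⟨i, (Finset.mem_erase.mp hi).1, rfl⟩

lemma real_ker (x : Fin n → ℝ) (aff : Fin n)
    (hx : ∀ i, ∑ j, (C.d i * (C.a i j : ℝ)) * x j = 0) :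
    ∀ j, x j = x aff / (C.dz aff : ℝ) * (C.dz j : ℝ) := by
  have hdz : (C.dz aff : ℝ) ≠ 0 := by
    exact_mod_cast ne_of_gt (C.dz_pos aff)
  set h : Fin n → ℝ := fun j => x j - x aff / (C.dz aff : ℝ) * (C.dz j : ℝ) with hh
  have hMdz : ∀ i, ∑ j, (C.d i * (C.a i j : ℝ)) * (C.dz j : ℝ) = 0 := by
    intro i
    calc ∑ j, (C.d i * (C.a i j : ℝ)) * (C.dz j : ℝ)
        = ∑ j, (C.dz j : ℝ) * (C.d j * (C.a j i : ℝ)) := by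
          refine Finset.sum_congr rfl fun j _ => ?_
          rw [C.symmetrizable i j]; ring
      _ = 0 := C.dz_ker i
  have hMh : ∀ i, ∑ j, (C.d i * (C.a i j : ℝ)) * h j = 0 := by
    intro i
    have e1 : ∀ j, (C.d i * (C.a i j : ℝ)) * h j
        = (C.d i * (C.a i j : ℝ)) * x j
          - (x aff / (C.dz aff : ℝ)) * ((C.d i * (C.a i j : ℝ)) * (C.dz j : ℝ)) := by
      intro j; simp only [hh]; ring
    simp only [e1, Finset.sum_sub_distrib]
    rw [hx i, ← Finset.mul_sum, hMdz i]
    ring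
  have hQ : ∑ i, ∑ j, h i * h j * (C.d i * (C.a i j : ℝ)) = 0 := by
    refine Finset.sum_eq_zero fun i _ => ?_
    have e2 : ∀ j, h i * h j * (C.d i * (C.a i j : ℝ))
        = h i * ((C.d i * (C.a i j : ℝ)) * h j) := by intro j; ring
    simp only [e2, ← Finset.mul_sum]
    rw [hMh i, mul_zero]
  have haff : h aff = 0 := by
    simp only [hh]
    field_simp
    ring
  have hzero : h = 0 := by
    by_contra hne
    have hJ : (Finset.univ.erase aff : Finset (Fin n)) ≠ Finset.univ := by
      intro hEq
      have := Finset.mem_univ aff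
      rw [← hEq] at this
      exact Finset.notMem_erase aff _ this
    have hvan : ∀ i, i ∉ Finset.univ.erase aff → h i = 0 := by
      intro i hi
      have : i = aff := by
        by_contra hia
        exact hi (Finset.mem_erase.mpr ⟨hia, Finset.mem_univ i⟩)
      rw [this]; exact haff
    have := C.proper_posDef _ hJ h hvan hne
    exact absurd hQ (ne_of_gt this)
  intro j
  have := congrFun hzero j
  simp only [hh, Pi.zero_apply] at this
  linarith

lemma ker_char (aff : Fin n) (v : V n) (hv : ∀ i, C.K (C.coroot i) v = 0) :
    v = (v aff / ((C.dz aff : ℤ) : ℂ)) • C.δv := by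
  have hdz : ((C.dz aff : ℤ) : ℂ) ≠ 0 := by
    exact_mod_cast ne_of_gt (C.dz_pos aff)
  have hC : ∀ i, ∑ j, ((C.d i * (C.a i j : ℝ) : ℝ) : ℂ) * v j = 0 := by
    intro i
    have h0 := hv i
    rw [K_coroot_apply] at h0
    have e : ∑ j, ((C.d i * (C.a i j : ℝ) : ℝ) : ℂ) * v j
        = (C.d i : ℂ) * ∑ j, v j * ((C.a i j : ℤ) : ℂ) := by
      rw [Finset.mul_sum]
      refine Finset.sum_congr rfl fun j _ => ?_
      push_cast
      ring
    rw [e, h0, mul_zero]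
  have hxr : ∀ i, ∑ j, (C.d i * (C.a i j : ℝ)) * (v j).re = 0 := by
    intro i
    have := congrArg Complex.re (hC i)
    simpa [Complex.re_sum, Complex.re_ofReal_mul] using this
  have hxi : ∀ i, ∑ j, (C.d i * (C.a i j : ℝ)) * (v j).im = 0 := by
    intro i
    have := congrArg Complex.im (hC i)
    simpa [Complex.im_sum, Complex.im_ofReal_mul] using this
  have hre := C.real_ker (fun j => (v j).re) aff hxr
  have him := C.real_ker (fun j => (v j).im) aff hxi
  funext j
  rw [Pi.smul_apply, smul_eq_mul]
  have e1 : v j = ((v j).re : ℂ) + ((v j).im : ℂ) * Complex.I := (Complex.re_add_im _).symm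
  have e2 : v aff = ((v aff).re : ℂ) + ((v aff).im : ℂ) * Complex.I := (Complex.re_add_im _).symm
  have hre' : (v j).re = (v aff).re / (C.dz aff : ℝ) * (C.dz j : ℝ) := hre j
  have him' : (v j).im = (v aff).im / (C.dz aff : ℝ) * (C.dz j : ℝ) := him j
  rw [e1, hre', him', show C.δv j = ((C.dz j : ℤ) : ℂ) from rfl, e2]
  have hdzr : (C.dz aff : ℝ) ≠ 0 := by exact_mod_cast ne_of_gt (C.dz_pos aff)
  push_cast
  field_simp
  simp only [Complex.add_re, Complex.add_im, Complex.ofReal_re, Complex.ofReal_im, Complex.mul_re,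
    Complex.mul_im, Complex.I_re, Complex.I_im]
  ring

lemma ker_cox_sub_one (aff : Fin n) :
    LinearMap.ker (C.cox.toLinearMap - LinearMap.id) = Submodule.span ℂ {C.δv} := by
  apply le_antisymm
  · intro v hv
    have hfix : C.cox v = v := by
      have h0 := LinearMap.mem_ker.mp hv
      have h1 : C.cox v - v = 0 := h0
      exact sub_eq_zero.mp h1
    have hcox : (((List.finRange n).map C.s).prod) v = v := by
      rw [← cox_eq]; exact hfix
    have h0 : ∀ i, C.K (C.coroot i) v = 0 := fun i =>
      C.fixed_coroot _ (List.nodup_finRange n) v hcox i (List.mem_finRange i)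
    rw [C.ker_char aff v h0]
    exact Submodule.smul_mem _ _ (Submodule.mem_span_singleton_self _)
  · rw [Submodule.span_le, Set.singleton_subset_iff]
    have hδ : C.cox C.δv = C.δv := C.cox_δ
    show C.δv ∈ LinearMap.ker (C.cox.toLinearMap - LinearMap.id)
    rw [LinearMap.mem_ker]
    show C.cox C.δv - C.δv = 0
    rw [hδ, sub_self]

end Aux2

/-- Lemma 3.4: the fixed space of `c` acting on the dual space `V*` is the line
spanned by `φ_c = K (γ_c) ·`. -/
theorem dual_fixed_space {n : ℕ} (C : AffineGCM n) (aff : Fin n)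
    (haff : ((Subgroup.closure (C.s '' {j : Fin n | j ≠ aff}) : Subgroup (V n ≃ₗ[ℂ] V n)) : Set (V n ≃ₗ[ℂ] V n)).Finite)
    (γ : V n) (hγ : γ ∈ Vfin aff) (hγ1 : C.cox γ - γ = C.δv) :
    ∀ φ : Module.Dual ℂ (V n), (∀ v, φ (C.cox.symm v) = φ v) ↔ ∃ t : ℂ, φ = t • C.K γ := by
  have hdzc : ((C.dz aff : ℤ) : ℂ) ≠ 0 := by exact_mod_cast ne_of_gt (C.dz_pos aff)
  have hδne : C.δv ≠ 0 := by
    intro h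
    exact hdzc (congrFun h aff)
  have hγ0 : γ ≠ 0 := by
    intro h
    rw [h] at hγ1
    simp only [map_zero, sub_zero] at hγ1
    exact hδne hγ1.symm
  have hcoxγ : C.cox γ = C.δv + γ := sub_eq_iff_eq_add.mp hγ1
  have hKγcox : ∀ v, C.K γ (C.cox v) = C.K γ v := by
    intro v
    have hinv := C.K_cox γ v
    rw [hcoxγ, map_add, LinearMap.add_apply, C.K_δ_left, zero_add] at hinv
    exact hinv
  set L : V n →ₗ[ℂ] V n := C.cox.toLinearMap - LinearMap.id with hL
  have hLapp : ∀ v, L v = C.cox v - v := fun v => rfl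
  have hker : LinearMap.ker L = Submodule.span ℂ {C.δv} := C.ker_cox_sub_one aff
  -- γ is real
  have hγbar : conjv γ = γ := by
    have h1 : C.cox (conjv γ) - conjv γ = C.δv := by
      rw [C.cox_conj]
      funext j
      simp only [Pi.sub_apply]
      show (starRingEnd ℂ) (C.cox γ j) - (starRingEnd ℂ) (γ j) = C.δv j
      rw [← map_sub]
      have h2 : C.cox γ j - γ j = C.δv j := by
        have := congrFun hγ1 j
        simpa using this
      rw [h2]
      exact map_intCast (starRingEnd ℂ) (C.dz j)
    have hdiff : γ - conjv γ ∈ LinearMap.ker L := by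
      rw [LinearMap.mem_ker]
      have he : L (γ - conjv γ) = (C.cox γ - γ) - (C.cox (conjv γ) - conjv γ) := by
        rw [hLapp, map_sub]
        abel
      rw [he, hγ1, h1, sub_self]
    rw [hker, Submodule.mem_span_singleton] at hdiff
    obtain ⟨z, hz⟩ := hdiff
    have haffc : γ aff = 0 := Vfin_coord_aff hγ
    have hz0 : z = 0 := by
      have h3 := congrFun hz aff
      have h4 : (γ - conjv γ) aff = 0 := by
        simp [conjv, haffc]
      rw [h4] at h3
      have h5 : z * ((C.dz aff : ℤ) : ℂ) = 0 := h3
      rcases mul_eq_zero.mp h5 with h | h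
      · exact h
      · exact absurd h hdzc
    have h6 : γ - conjv γ = 0 := by rw [← hz, hz0, zero_smul]
    have h7 := sub_eq_zero.mp h6
    exact h7.symm
  set g : Fin n → ℝ := fun j => (γ j).re with hg
  have hγg : ∀ j, γ j = (g j : ℂ) := by
    intro j
    have := congrFun hγbar j
    exact (Complex.conj_eq_iff_re.mp this).symm
  have hgne : g ≠ 0 := by
    intro h
    apply hγ0
    funext j
    rw [hγg j, congrFun h j]
    simp
  have hJ : (Finset.univ.erase aff : Finset (Fin n)) ≠ Finset.univ := by
    intro hEq
    have := Finset.mem_univ aff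
    rw [← hEq] at this
    exact Finset.notMem_erase aff _ this
  have hvan : ∀ i, i ∉ Finset.univ.erase aff → g i = 0 := by
    intro i hi
    have hia : i = aff := by
      by_contra h'
      exact hi (Finset.mem_erase.mpr ⟨h', Finset.mem_univ i⟩)
    show (γ i).re = 0
    rw [hia, Vfin_coord_aff hγ]
    simp
  have hpos := C.proper_posDef _ hJ g hvan hgne
  have hKγγ : C.K γ γ = ((∑ i, ∑ j, g i * g j * (C.d i * (C.a i j : ℝ)) : ℝ) : ℂ) := by
    rw [K_apply]
    push_cast
    refine Finset.sum_congr rfl fun i _ => Finset.sum_congr rfl fun j _ => ?_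
    rw [hγg i, hγg j]
  have hKγγne : C.K γ γ ≠ 0 := by
    rw [hKγγ]
    exact_mod_cast ne_of_gt hpos
  have hKγne : C.K γ ≠ 0 := by
    intro h
    apply hKγγne
    rw [h]
    rfl
  -- dimension counting
  have hfr : Module.finrank ℂ (V n) = n := Module.finrank_fin_fun ℂ
  have h1 : Module.finrank ℂ (LinearMap.ker L) = 1 := by
    rw [hker]
    exact finrank_span_singleton hδne
  have h2 := LinearMap.finrank_range_add_finrank_ker L
  have h3 : Module.finrank ℂ (V n ⧸ LinearMap.range L)
      = Module.finrank ℂ ((LinearMap.range L).dualAnnihilator) :=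
    LinearEquiv.finrank_eq (Subspace.quotEquivAnnihilator (LinearMap.range L))
  have h4 := Submodule.finrank_quotient_add_finrank (LinearMap.range L)
  have hn : 0 < n := aff.pos
  have hann1 : Module.finrank ℂ ((LinearMap.range L).dualAnnihilator) = 1 := by
    rw [hfr] at h2 h4
    omega
  have hKγmem : C.K γ ∈ (LinearMap.range L).dualAnnihilator := by
    rw [Submodule.mem_dualAnnihilator]
    rintro w ⟨v, rfl⟩
    rw [hLapp, map_sub, hKγcox, sub_self]
  have hspan : Submodule.span ℂ {(C.K γ : Module.Dual ℂ (V n))}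
      = (LinearMap.range L).dualAnnihilator := by
    apply Submodule.eq_of_le_of_finrank_le
    · rw [Submodule.span_le, Set.singleton_subset_iff]
      exact hKγmem
    · rw [finrank_span_singleton hKγne, hann1]
  intro φ
  constructor
  · intro hφ
    have hφmem : φ ∈ (LinearMap.range L).dualAnnihilator := by
      rw [Submodule.mem_dualAnnihilator]
      rintro w ⟨v, rfl⟩
      have h5 := hφ (C.cox v)
      rw [LinearEquiv.symm_apply_apply] at h5
      rw [hLapp, map_sub, ← h5, sub_self]
    rw [← hspan, Submodule.mem_span_singleton] at hφmem
    obtain ⟨t, ht⟩ := hφmem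
    exact ⟨t, ht.symm⟩
  · rintro ⟨t, rfl⟩ v
    have h5 : C.K γ (C.cox.symm v) = C.K γ v := by
      have h6 := hKγcox (C.cox.symm v)
      rw [LinearEquiv.apply_symm_apply] at h6
      exact h6.symm
    show (t • C.K γ) (C.cox.symm v) = (t • C.K γ) v
    rw [LinearMap.smul_apply, LinearMap.smul_apply, smul_eq_mul, smul_eq_mul, h5]

end AffineGCM
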